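/- Every bounded local triple derivation T : A → A on a unital C*-algebra A is a triple derivation. -/

import Mathlib

/-- The triple product `{a,b,c} = ½(a b* c + c b* a)` on a C*-algebra. -/
noncomputable def tripleProd {A : Type*} [NonUnitalRing A] [StarRing A] [Module ℂ A]
    (a b c : A) : A :=
  (2 : ℂ)⁻¹ • (a * star b * c + c * star b * a)

open NormedSpace

section LTDAux

variable {A : Type*} [CStarAlgebra A]

private lemma ltd_halfdouble (x : A) : (2:ℂ)⁻¹ • (x + x) = x := by
  rw [← two_smul ℂ x, smul_smul]; norm_num

private lemma ltd_halfcancel {x y : A} (h : x + x = y + y) : x = y := by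
  have h2 : (2:ℂ) • x = (2:ℂ) • y := by rw [two_smul, two_smul]; exact h
  exact smul_right_injective A two_ne_zero h2

private lemma ltd_skew_decomp (x : A) : ∃ a b : A, star a = -a ∧ star b = -b ∧
    x = a + (-Complex.I) • b := by
  refine ⟨(2:ℂ)⁻¹ • (x - star x), (2:ℂ)⁻¹ • (Complex.I • (x + star x)), ?_, ?_, ?_⟩
  · rw [star_smul, star_sub, star_star, ← smul_neg]
    congr 1
    · norm_num
    · abel
  · rw [star_smul, star_smul, star_add, star_star, ← smul_neg]
    congr 1
    · norm_num
    rw [← neg_smul]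
    congr 1
    · simp [Complex.ext_iff]
    · abel
  · rw [smul_smul, smul_smul, smul_sub]
    have : -Complex.I * (2:ℂ)⁻¹ * Complex.I = (2:ℂ)⁻¹ := by
      simp [Complex.ext_iff]
    rw [this, smul_add]
    module

private lemma ltd_key1 (T : A →L[ℂ] A)
    (hloc : ∀ a : A, ∃ δ : A →ₗ[ℂ] A,
      (∀ x y z : A,
        δ (tripleProd x y z) = tripleProd (δ x) y z + tripleProd x (δ y) z + tripleProd x y (δ z)) ∧
      T a = δ a)
    (v : A) (hv1 : v * star v = 1) (hv2 : star v * v = 1) :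
    star v * T v + star (T v) * v = 0 := by
  obtain ⟨δ, hδ, hTv⟩ := hloc v
  have h111 : tripleProd v v v = v := by
    unfold tripleProd
    rw [hv1, one_mul]
    exact ltd_halfdouble v
  have heq := hδ v v v
  rw [h111, ← hTv] at heq
  have t1 : tripleProd (T v) v v = T v := by
    unfold tripleProd
    rw [mul_assoc (T v), hv2, mul_one, hv1, one_mul]
    exact ltd_halfdouble _
  have t3 : tripleProd v v (T v) = T v := by
    unfold tripleProd
    rw [hv1, one_mul, mul_assoc (T v), hv2, mul_one]
    rw [add_comm]
    exact ltd_halfdouble _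
  have t2 : tripleProd v (T v) v = v * star (T v) * v := by
    unfold tripleProd
    exact ltd_halfdouble _
  rw [t1, t2, t3] at heq
  have h5 : v * star (T v) * v + T v = 0 := by
    calc v * star (T v) * v + T v
        = (T v + v * star (T v) * v + T v) - T v := by abel
      _ = T v - T v := by rw [← heq]
      _ = 0 := sub_self _
  have h6 := congrArg (fun q => star v * q) h5
  simp only [mul_add, mul_zero] at h6
  have h7 : star v * (v * star (T v) * v) = star (T v) * v := by
    calc star v * (v * star (T v) * v) = (star v * v) * (star (T v) * v) := by noncomm_ring
      _ = star (T v) * v := by rw [hv2, one_mul]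
  rw [h7] at h6
  rw [add_comm]
  exact h6

private lemma ltd_deriv_eqs (T : A →L[ℂ] A)
    (hkey : ∀ v : A, v * star v = 1 → star v * v = 1 → star v * T v + star (T v) * v = 0)
    (a : A) (ha : star a = -a) :
    T a + star (T a) = a * T 1 - star (T 1) * a ∧
    T (a * a) + star (T (a * a)) =
      a * T a + a * T a - star (T a) * a - star (T a) * a - a * a * T 1 - star (T 1) * (a * a) := by
  have hcomm : Commute a (-a) := (Commute.refl a).neg_right
  have hsu : ∀ t : ℝ, star (exp (t • a)) = exp (t • (-a)) := fun t => by
    rw [star_exp, star_smul, star_trivial, ha]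
  have hprod1 : ∀ t : ℝ, exp (t • a) * exp (t • (-a)) = 1 := fun t => by
    let +nondep : NormedAlgebra ℚ A := .restrictScalars ℚ ℂ A
    rw [← exp_add_of_commute (hcomm.smul_left t |>.smul_right t)]; simp
  have hprod2 : ∀ t : ℝ, exp (t • (-a)) * exp (t • a) = 1 := fun t => by
    let +nondep : NormedAlgebra ℚ A := .restrictScalars ℚ ℂ A
    rw [← exp_add_of_commute (hcomm.symm.smul_left t |>.smul_right t)]; simp
  have hFzero : ∀ t : ℝ,
      exp (t • (-a)) * T (exp (t • a)) + star (T (exp (t • a))) * exp (t • a) = 0 := by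
    intro t
    have h := hkey (exp (t • a)) (by rw [hsu t]; exact hprod1 t) (by rw [hsu t]; exact hprod2 t)
    rwa [hsu t] at h
  have hu : ∀ t : ℝ, HasDerivAt (fun s : ℝ => exp (s • a)) (a * exp (t • a)) t :=
    fun t => hasDerivAt_exp_smul_const' a t
  have hw : ∀ t : ℝ, HasDerivAt (fun s : ℝ => exp (s • (-a))) (-a * exp (t • (-a))) t :=
    fun t => hasDerivAt_exp_smul_const' (-a) t
  have hS : ∀ t : ℝ, HasDerivAt (fun s : ℝ => T (exp (s • a))) (T (a * exp (t • a))) t :=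
    fun t => (T.restrictScalars ℝ).hasFDerivAt.comp_hasDerivAt t (hu t)
  have hau : ∀ t : ℝ, HasDerivAt (fun s : ℝ => a * exp (s • a)) (a * (a * exp (t • a))) t :=
    fun t => (hu t).const_mul a
  have hR : ∀ t : ℝ, HasDerivAt (fun s : ℝ => T (a * exp (s • a))) (T (a * (a * exp (t • a)))) t :=
    fun t => (T.restrictScalars ℝ).hasFDerivAt.comp_hasDerivAt t (hau t)
  have hG0 : ∀ t : ℝ,
      -a * exp (t • (-a)) * T (exp (t • a)) + exp (t • (-a)) * T (a * exp (t • a)) +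
        (star (T (a * exp (t • a))) * exp (t • a) +
          star (T (exp (t • a))) * (a * exp (t • a))) = 0 := by
    intro t
    have hF : HasDerivAt
        (fun s : ℝ => exp (s • (-a)) * T (exp (s • a)) +
          star (T (exp (s • a))) * exp (s • a))
        (-a * exp (t • (-a)) * T (exp (t • a)) + exp (t • (-a)) * T (a * exp (t • a)) +
          (star (T (a * exp (t • a))) * exp (t • a) +
            star (T (exp (t • a))) * (a * exp (t • a)))) t :=
      ((hw t).mul (hS t)).add (((hS t).star).mul (hu t))
    have hFc : (fun s : ℝ => exp (s • (-a)) * T (exp (s • a)) +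
        star (T (exp (s • a))) * exp (s • a)) = fun _ => (0:A) := funext hFzero
    rw [hFc] at hF
    exact hF.unique (hasDerivAt_const t 0)
  have hG' : HasDerivAt
      (fun s : ℝ =>
        -a * exp (s • (-a)) * T (exp (s • a)) + exp (s • (-a)) * T (a * exp (s • a)) +
          (star (T (a * exp (s • a))) * exp (s • a) +
            star (T (exp (s • a))) * (a * exp (s • a))))
      ((-a * (-a * exp ((0:ℝ) • (-a)))) * T (exp ((0:ℝ) • a)) +
          (-a * exp ((0:ℝ) • (-a))) * T (a * exp ((0:ℝ) • a)) +
        (-a * exp ((0:ℝ) • (-a)) * T (a * exp ((0:ℝ) • a)) +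
          exp ((0:ℝ) • (-a)) * T (a * (a * exp ((0:ℝ) • a)))) +
        ((star (T (a * (a * exp ((0:ℝ) • a)))) * exp ((0:ℝ) • a) +
            star (T (a * exp ((0:ℝ) • a))) * (a * exp ((0:ℝ) • a))) +
          (star (T (a * exp ((0:ℝ) • a))) * (a * exp ((0:ℝ) • a)) +
            star (T (exp ((0:ℝ) • a))) * (a * (a * exp ((0:ℝ) • a)))))) 0 :=
    ((((hw 0).const_mul (-a)).mul (hS 0)).add ((hw 0).mul (hR 0))).add
      ((((hR 0).star).mul (hu 0)).add (((hS 0).star).mul (hau 0)))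
  have hGc : (fun s : ℝ =>
      -a * exp (s • (-a)) * T (exp (s • a)) + exp (s • (-a)) * T (a * exp (s • a)) +
        (star (T (a * exp (s • a))) * exp (s • a) +
          star (T (exp (s • a))) * (a * exp (s • a)))) = fun _ => (0:A) := funext hG0
  rw [hGc] at hG'
  have h2 := hG'.unique (hasDerivAt_const 0 0)
  have h1 := hG0 0
  simp only [zero_smul, exp_zero, mul_one, one_mul] at h1 h2
  constructor
  · rw [← sub_eq_zero, ← h1]; noncomm_ring
  · rw [← sub_eq_zero, ← h2]; noncomm_ring

private lemma ltd_star (T : A →L[ℂ] A)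
    (hE1 : ∀ a : A, star a = -a → star (T a) = a * T 1 + T 1 * a - T a) :
    ∀ x : A, star (T x) = T (star x) - star x * T 1 - T 1 * star x := by
  have hC : ∀ x : A, T (star x) - star (T x) - star x * T 1 - T 1 * star x = 0 := by
    have hadd : ∀ x y : A,
        T (star (x + y)) - star (T (x + y)) - star (x + y) * T 1 - T 1 * star (x + y)
          = (T (star x) - star (T x) - star x * T 1 - T 1 * star x)
            + (T (star y) - star (T y) - star y * T 1 - T 1 * star y) := by
      intro x y
      simp only [star_add, map_add]
      noncomm_ring
    have hsmul : ∀ (c : ℂ) (x : A),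
        T (star (c • x)) - star (T (c • x)) - star (c • x) * T 1 - T 1 * star (c • x)
          = star c • (T (star x) - star (T x) - star x * T 1 - T 1 * star x) := by
      intro c x
      simp only [star_smul, map_smul, smul_mul_assoc, mul_smul_comm, smul_sub]
    have hskew : ∀ a : A, star a = -a →
        T (star a) - star (T a) - star a * T 1 - T 1 * star a = 0 := by
      intro a haa
      rw [haa, map_neg, hE1 a haa]
      noncomm_ring
    intro x
    obtain ⟨a, b, haa, hbb, hx⟩ := ltd_skew_decomp x
    rw [hx, hadd, hsmul, hskew a haa, hskew b hbb, smul_zero, add_zero]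
  intro x
  rw [← sub_eq_zero, ← neg_eq_zero, ← hC x]
  noncomm_ring

private lemma ltd_sq (T : A →L[ℂ] A) (hd : star (T 1) = -T 1)
    (hE1 : ∀ a : A, star a = -a → star (T a) = a * T 1 + T 1 * a - T a)
    (hE2 : ∀ a : A, star a = -a → T (a * a) + star (T (a * a)) =
      a * T a + a * T a - star (T a) * a - star (T a) * a - a * a * T 1 - star (T 1) * (a * a))
    (hstar : ∀ x : A, star (T x) = T (star x) - star x * T 1 - T 1 * star x) :
    ∀ a : A, star a = -a → T (a * a) = a * T a + T a * a - a * T 1 * a := by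
  intro a haa
  have h2 := hE2 a haa
  have hsq : star (T (a * a)) = T (a * a) - a * a * T 1 - T 1 * (a * a) := by
    have h := hstar (a * a)
    rwa [show star (a * a) = a * a from by rw [star_mul, haa]; noncomm_ring] at h
  rw [hsq, hE1 a haa, hd] at h2
  apply ltd_halfcancel
  rw [← sub_eq_zero] at h2 ⊢
  rw [← h2]
  noncomm_ring

private noncomputable def ltdB (T : A →L[ℂ] A) (x y : A) : A :=
  T (x * y + y * x) - x * T y - T y * x - y * T x - T x * y + x * T 1 * y + y * T 1 * x

private lemma ltdB_comm (T : A →L[ℂ] A) (x y : A) : ltdB T x y = ltdB T y x := by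
  unfold ltdB
  rw [show x * y + y * x = y * x + x * y from add_comm _ _]
  noncomm_ring

private lemma ltdB_add_left (T : A →L[ℂ] A) (x x' y : A) :
    ltdB T (x + x') y = ltdB T x y + ltdB T x' y := by
  unfold ltdB
  rw [show (x + x') * y + y * (x + x') = (x * y + y * x) + (x' * y + y * x') from by noncomm_ring,
    map_add T (x * y + y * x) (x' * y + y * x'), map_add T x x']
  noncomm_ring

private lemma ltdB_smul_left (T : A →L[ℂ] A) (c : ℂ) (x y : A) :
    ltdB T (c • x) y = c • ltdB T x y := by
  unfold ltdB
  rw [show (c • x) * y + y * (c • x) = c • (x * y + y * x) from by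
      rw [smul_mul_assoc, mul_smul_comm, smul_add], map_smul]
  simp only [map_smul, smul_mul_assoc, mul_smul_comm, smul_sub, smul_add]

private lemma ltd_ball (T : A →L[ℂ] A)
    (hsq : ∀ a : A, star a = -a → T (a * a) = a * T a + T a * a - a * T 1 * a) :
    ∀ x y : A, ltdB T x y = 0 := by
  have hdiag : ∀ a : A, star a = -a → ltdB T a a = 0 := by
    intro a haa
    unfold ltdB
    rw [map_add, hsq a haa]
    noncomm_ring
  have hskewpair : ∀ a b : A, star a = -a → star b = -b → ltdB T a b = 0 := by
    intro a b haa hbb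
    have hab : star (a + b) = -(a + b) := by rw [star_add, haa, hbb]; abel
    have h := hdiag (a + b) hab
    rw [ltdB_add_left, ltdB_comm T a (a + b), ltdB_add_left, ltdB_comm T b (a + b),
      ltdB_add_left, hdiag a haa, hdiag b hbb, ltdB_comm T b a] at h
    have h2 : ltdB T a b + ltdB T a b = 0 := by rw [← h]; abel
    apply ltd_halfcancel
    rw [h2, add_zero]
  intro x y
  obtain ⟨a1, a2, ha1, ha2, hx⟩ := ltd_skew_decomp x
  obtain ⟨b1, b2, hb1, hb2, hy⟩ := ltd_skew_decomp y
  have hsl : ∀ u v : A, star v = -v → ltdB T (u + -Complex.I • v) y =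
      ltdB T u y + (-Complex.I) • ltdB T v y := by
    intro u v _
    rw [ltdB_add_left, ltdB_smul_left]
  rw [hx, ltdB_add_left, ltdB_smul_left]
  have hright : ∀ u : A, star u = -u → ltdB T u y = 0 := by
    intro u huu
    rw [ltdB_comm, hy, ltdB_add_left, ltdB_smul_left, ltdB_comm T b1 u, ltdB_comm T b2 u,
      hskewpair u b1 huu hb1, hskewpair u b2 huu hb2, smul_zero, add_zero]
  rw [hright a1 ha1, hright a2 ha2, smul_zero, add_zero]

private lemma ltd_main (T : A →L[ℂ] A)
    (hTJ : ∀ p q : A, T (p * q + q * p) =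
      p * T q + T q * p + q * T p + T p * q - p * T 1 * q - q * T 1 * p) :
    ∀ x w z : A, T (x * w * z + z * w * x) + T (x * w * z + z * w * x) =
      (T x * w * z + z * w * T x +
        (x * (T w - w * T 1 - T 1 * w) * z + z * (T w - w * T 1 - T 1 * w) * x) +
        (x * w * T z + T z * w * x)) +
      (T x * w * z + z * w * T x +
        (x * (T w - w * T 1 - T 1 * w) * z + z * (T w - w * T 1 - T 1 * w) * x) +
        (x * w * T z + T z * w * x)) := by
  intro x w z
  have harg : ((x * w + w * x) * z + z * (x * w + w * x)) +
      ((z * w + w * z) * x + x * (z * w + w * z)) -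
      ((x * z + z * x) * w + w * (x * z + z * x)) =
      (x * w * z + z * w * x) + (x * w * z + z * w * x) := by noncomm_ring
  have h4 := hTJ (x * w + w * x) z
  have h5 := hTJ (z * w + w * z) x
  have h6 := hTJ (x * z + z * x) w
  rw [hTJ x w] at h4
  rw [hTJ z w] at h5
  rw [hTJ x z] at h6
  have hsplit : T (x * w * z + z * w * x) + T (x * w * z + z * w * x)
      = T ((x * w + w * x) * z + z * (x * w + w * x)) +
          T ((z * w + w * z) * x + x * (z * w + w * z)) -
          T ((x * z + z * x) * w + w * (x * z + z * x)) := by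
    rw [← map_add, ← map_add, ← map_sub, harg]
  rw [hsplit, h4, h5, h6]
  noncomm_ring

end LTDAux

/-- **Burgos–Fernández-Polo–Garcés–Peralta.**  Every bounded local triple derivation
on a unital C*-algebra is a triple derivation. -/
theorem bounded_local_triple_derivation_is_triple_derivation
    {A : Type*} [CStarAlgebra A] (T : A →L[ℂ] A)
    (hloc : ∀ a : A, ∃ δ : A →ₗ[ℂ] A,
      (∀ x y z : A,
        δ (tripleProd x y z) = tripleProd (δ x) y z + tripleProd x (δ y) z + tripleProd x y (δ z)) ∧
      T a = δ a) :
    ∀ a b c : A,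
      T (tripleProd a b c) = tripleProd (T a) b c + tripleProd a (T b) c + tripleProd a b (T c) := by
  have hkey : ∀ v : A, v * star v = 1 → star v * v = 1 → star v * T v + star (T v) * v = 0 :=
    ltd_key1 T hloc
  have hd : star (T 1) = -T 1 := by
    have h := hkey 1 (by simp) (by simp)
    simp only [star_one, one_mul, mul_one] at h
    exact eq_neg_of_add_eq_zero_right h
  have hE1 : ∀ a : A, star a = -a → star (T a) = a * T 1 + T 1 * a - T a := by
    intro a haa
    have h := (ltd_deriv_eqs T hkey a haa).1
    rw [hd] at h
    rw [← sub_eq_zero] at h ⊢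
    rw [← h]
    noncomm_ring
  have hE2 : ∀ a : A, star a = -a → T (a * a) + star (T (a * a)) =
      a * T a + a * T a - star (T a) * a - star (T a) * a - a * a * T 1 - star (T 1) * (a * a) :=
    fun a haa => (ltd_deriv_eqs T hkey a haa).2
  have hstar := ltd_star T hE1
  have hsq := ltd_sq T hd hE1 hE2 hstar
  have hball := ltd_ball T hsq
  have hTJ : ∀ p q : A, T (p * q + q * p) =
      p * T q + T q * p + q * T p + T p * q - p * T 1 * q - q * T 1 * p := by
    intro p q
    have h := hball p q
    unfold ltdB at h
    rw [← sub_eq_zero, ← h]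
    noncomm_ring
  have hmain := ltd_main T hTJ
  intro a b c
  unfold tripleProd
  rw [map_smul, ← smul_add, ← smul_add]
  congr 1
  apply ltd_halfcancel
  rw [hstar b]
  rw [hmain a (star b) c]
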